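/- Assume m ≥ n ≥ 20, c ≥ 1, and b(q) ≥ s(q) for all q ∈ (0,1). Fix quantiles 1 > q₁ ≥ q₂ ≥ … ≥ q_N > 0. Then STR(q,π) ≥ OPT(q,π) for every valid assignment π that is not in E₂. -/

import Mathlib

open MeasureTheory Finset

/-- The k-th smallest element (0-based) of a multiset of reals, or 0 if out of range. -/
noncomputable def ordAsc (M : Multiset ℝ) (k : ℕ) : ℝ :=
  (M.sort (· ≤ ·)).getD k 0

/-- The k-th largest element (0-based) of a multiset of reals, or 0 if out of range. -/
noncomputable def ordDesc (M : Multiset ℝ) (k : ℕ) : ℝ :=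
  (M.sort (· ≤ ·)).reverse.getD k 0

/-- The optimal trade size: the largest `r ≤ min(#buyers, #sellers)` such that the
`r`-th highest buyer value is at least the `r`-th lowest seller cost (`r = 0` if none). -/
noncomputable def tradeSize (B S : Multiset ℝ) : ℕ :=
  Nat.findGreatest (fun r => 0 < r → ordAsc S (r - 1) ≤ ordDesc B (r - 1))
    (min (Multiset.card B) (Multiset.card S))

/-- The first-best gains from trade: `∑_{i=1}^r (b⁽ⁱ⁾ - s⁽ⁱ⁾)` where `r` is the optimal
trade size. -/
noncomputable def optGFT (B S : Multiset ℝ) : ℝ :=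
  ∑ i ∈ Finset.range (tradeSize B S), (ordDesc B i - ordAsc S i)

/-- The gains from trade of the Seller Trade Reduction mechanism: equals the first-best
GFT if `r = #sellers` or `b⁽ʳ⁾ ≥ s⁽ʳ⁺¹⁾`, and `∑_{i=1}^{r-1} (b⁽ⁱ⁾ - s⁽ⁱ⁾)` otherwise. -/
noncomputable def strGFT (B S : Multiset ℝ) : ℝ :=
  if tradeSize B S = Multiset.card S ∨
      (0 < tradeSize B S ∧ ordAsc S (tradeSize B S) ≤ ordDesc B (tradeSize B S - 1))
  then optGFT B S
  else ∑ i ∈ Finset.range (tradeSize B S - 1), (ordDesc B i - ordAsc S i)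


/-- Labels for agents: old buyer, new buyer, old seller, new seller. -/
inductive Label : Type
  | BO | BN | SO | SN
deriving DecidableEq

instance : Fintype Label where
  elems := {.BO, .BN, .SO, .SN}
  complete := by intro x; cases x <;> simp

/-- Total number of agents: `m` old buyers, `n` old sellers, `c` new buyers and `c` new
sellers. -/
def NN (m n c : ℕ) : ℕ := m + n + 2 * c

/-- The set of indices carrying a given label under the assignment `π`. -/
def labelSet (m n c : ℕ) (L : Label) (π : Fin (NN m n c) → Label) :
    Finset (Fin (NN m n c)) :=
  Finset.univ.filter (fun i => π i = L)

/-- Valid assignments: exactly `m` old buyers, `c` new buyers, `n` old sellers and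
`c` new sellers. -/
def validAssignments (m n c : ℕ) : Finset (Fin (NN m n c) → Label) :=
  Finset.univ.filter (fun π =>
    (labelSet m n c .BO π).card = m ∧ (labelSet m n c .BN π).card = c ∧
    (labelSet m n c .SO π).card = n ∧ (labelSet m n c .SN π).card = c)

/-- `p = ⌈n/10⌉`. -/
def pVal (n : ℕ) : ℕ := (n + 9) / 10

/-- `I₁`: the indices of the top `p` quantiles (1-based indices `{1,…,p}`). -/
def I1 (m n c : ℕ) : Finset (Fin (NN m n c)) :=
  Finset.univ.filter (fun i => (i : ℕ) < pVal n)

/-- `I₂`: 1-based indices `{p+1,…,2p}`. -/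
def I2 (m n c : ℕ) : Finset (Fin (NN m n c)) :=
  Finset.univ.filter (fun i => pVal n ≤ (i : ℕ) ∧ (i : ℕ) < 2 * pVal n)

/-- `J₁`: 1-based indices `{N-p+1,…,N}`. -/
def J1 (m n c : ℕ) : Finset (Fin (NN m n c)) :=
  Finset.univ.filter (fun i => NN m n c - pVal n ≤ (i : ℕ))

/-- `J₂`: 1-based indices `{N-2p+1,…,N-p}`. -/
def J2 (m n c : ℕ) : Finset (Fin (NN m n c)) :=
  Finset.univ.filter (fun i =>
    NN m n c - 2 * pVal n ≤ (i : ℕ) ∧ (i : ℕ) < NN m n c - pVal n)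

/-- The good event `E₁`: at least 2 new buyers in `I₁`, at least 1 old buyer in `I₂`,
at least 2 new sellers in `J₁`, at least 1 old seller in `J₂`. -/
def E1 (m n c : ℕ) : Finset (Fin (NN m n c) → Label) :=
  (validAssignments m n c).filter (fun π =>
    2 ≤ (I1 m n c ∩ labelSet m n c .BN π).card ∧
    1 ≤ (I2 m n c ∩ labelSet m n c .BO π).card ∧
    2 ≤ (J1 m n c ∩ labelSet m n c .SN π).card ∧
    1 ≤ (J2 m n c ∩ labelSet m n c .SO π).card)

/-- The bad event `E₂`: `E₁` fails and all new sellers are among the top `2n + 2c`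
indices. -/
def E2 (m n c : ℕ) : Finset (Fin (NN m n c) → Label) :=
  (validAssignments m n c).filter (fun π =>
    π ∉ E1 m n c ∧ ∀ i ∈ labelSet m n c .SN π, (i : ℕ) < 2 * n + 2 * c)

/-- The probability of an event under a uniformly random valid assignment. -/
noncomputable def prOf (m n c : ℕ) (E : Finset (Fin (NN m n c) → Label)) : ℝ :=
  (E.card : ℝ) / (validAssignments m n c).card

/-- The GFT of the first-best allocation in the **original** market under quantile vector
`q`, assignment `π`, and quantile-to-value maps `b` (buyers) and `s` (sellers). -/
noncomputable def OPTq (m n c : ℕ) (q : Fin (NN m n c) → ℝ) (b s : ℝ → ℝ)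
    (π : Fin (NN m n c) → Label) : ℝ :=
  optGFT ((labelSet m n c .BO π).val.map (fun i => b (q i)))
         ((labelSet m n c .SO π).val.map (fun i => s (q i)))

/-- The GFT of the Seller Trade Reduction mechanism in the **augmented** market under
quantile vector `q`, assignment `π`, and quantile-to-value maps `b` and `s`. -/
noncomputable def STRq (m n c : ℕ) (q : Fin (NN m n c) → ℝ) (b s : ℝ → ℝ)
    (π : Fin (NN m n c) → Label) : ℝ :=
  strGFT ((labelSet m n c .BO π ∪ labelSet m n c .BN π).val.map (fun i => b (q i)))
         ((labelSet m n c .SO π ∪ labelSet m n c .SN π).val.map (fun i => s (q i)))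


section OrderStats

private lemma sorted_getElem_le {l : List ℝ} (h : l.Pairwise (· ≤ ·)) {i j : ℕ}
    (hij : i ≤ j) (hj : j < l.length) : l[i]'(lt_of_le_of_lt hij hj) ≤ l[j] := by
  simpa using h.rel_get_of_le (a := ⟨i, lt_of_le_of_lt hij hj⟩) (b := ⟨j, hj⟩) hij

private lemma countP_sort (M : Multiset ℝ) (p : ℝ → Prop) [DecidablePred p] :
    (M.sort (· ≤ ·)).countP (fun x => decide (p x)) = M.countP p := by
  conv_rhs => rw [← Multiset.sort_eq M (· ≤ ·)]
  rw [Multiset.coe_countP]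

lemma ordAsc_le_of_countP {M : Multiset ℝ} {v : ℝ} {k : ℕ}
    (h : k + 1 ≤ M.countP (fun x => x ≤ v)) : ordAsc M k ≤ v := by
  set L := M.sort (· ≤ ·) with hL
  have hlen : L.length = Multiset.card M := Multiset.length_sort _
  have hs : L.Pairwise (· ≤ ·) := Multiset.pairwise_sort _ _
  have hk : k < L.length := by
    have := Multiset.countP_le_card (fun x => x ≤ v) M; omega
  rw [ordAsc, ← hL, List.getD_eq_getElem _ _ hk]
  by_contra hvk
  push_neg at hvk
  have hcnt : L.countP (fun x => decide (x ≤ v)) ≤ k := by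
    have hsplit : L.countP (fun x => decide (x ≤ v))
        = (L.take k).countP (fun x => decide (x ≤ v))
          + (L.drop k).countP (fun x => decide (x ≤ v)) := by
      rw [← List.countP_append, List.take_append_drop]
    have h1 : (L.take k).countP (fun x => decide (x ≤ v)) ≤ k := by
      calc (L.take k).countP (fun x => decide (x ≤ v)) ≤ (L.take k).length :=
            List.countP_le_length
        _ ≤ k := by rw [List.length_take]; omega
    have h2 : (L.drop k).countP (fun x => decide (x ≤ v)) = 0 := by
      rw [List.countP_eq_zero]
      intro a ha
      rw [List.mem_iff_getElem] at ha
      obtain ⟨i, hi, rfl⟩ := ha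
      have hlend : i < L.length - k := by rw [List.length_drop] at hi; omega
      have hge : L[k] ≤ (L.drop k)[i] := by
        rw [List.getElem_drop]
        exact sorted_getElem_le hs (by omega) (by omega)
      simp only [decide_eq_true_eq, not_le]
      linarith
    omega
  rw [countP_sort] at hcnt
  omega

lemma le_ordAsc_of_countP {M : Multiset ℝ} {v : ℝ} {k : ℕ}
    (h : M.countP (fun x => x < v) ≤ k) (hk : k < Multiset.card M) : v ≤ ordAsc M k := by
  set L := M.sort (· ≤ ·) with hL
  have hlen : L.length = Multiset.card M := Multiset.length_sort _
  have hs : L.Pairwise (· ≤ ·) := Multiset.pairwise_sort _ _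
  have hk' : k < L.length := by omega
  rw [ordAsc, ← hL, List.getD_eq_getElem _ _ hk']
  by_contra hvk
  push_neg at hvk
  have hcnt : k + 1 ≤ L.countP (fun x => decide (x < v)) := by
    have hall : (L.take (k+1)).countP (fun x => decide (x < v)) = (L.take (k+1)).length := by
      rw [List.countP_eq_length]
      intro a ha
      rw [List.mem_iff_getElem] at ha
      obtain ⟨i, hi, rfl⟩ := ha
      have hi' : i < k + 1 := by rw [List.length_take] at hi; omega
      have : (L.take (k+1))[i] ≤ L[k] := by
        rw [List.getElem_take]
        exact sorted_getElem_le hs (by omega) hk'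
      simp only [decide_eq_true_eq]
      linarith
    have hlen2 : (L.take (k+1)).length = k + 1 := by rw [List.length_take]; omega
    calc k + 1 = (L.take (k+1)).countP (fun x => decide (x < v)) := by rw [hall, hlen2]
      _ ≤ L.countP (fun x => decide (x < v)) := (List.take_sublist _ _).countP_le
  rw [countP_sort] at hcnt
  omega

lemma countP_ordAsc {M : Multiset ℝ} {k : ℕ} (hk : k < Multiset.card M) :
    k + 1 ≤ M.countP (fun x => x ≤ ordAsc M k) := by
  set L := M.sort (· ≤ ·) with hL
  have hlen : L.length = Multiset.card M := Multiset.length_sort _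
  have hs : L.Pairwise (· ≤ ·) := Multiset.pairwise_sort _ _
  have hk' : k < L.length := by omega
  rw [ordAsc, ← hL, List.getD_eq_getElem _ _ hk']
  rw [← countP_sort, ← hL]
  have hall : (L.take (k+1)).countP (fun x => decide (x ≤ L[k])) = (L.take (k+1)).length := by
    rw [List.countP_eq_length]
    intro a ha
    rw [List.mem_iff_getElem] at ha
    obtain ⟨i, hi, rfl⟩ := ha
    have hi' : i < k + 1 := by rw [List.length_take] at hi; omega
    have : (L.take (k+1))[i] ≤ L[k] := by
      rw [List.getElem_take]
      exact sorted_getElem_le hs (by omega) hk'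
    simpa using this
  have hlen2 : (L.take (k+1)).length = k + 1 := by rw [List.length_take]; omega
  calc k + 1 = (L.take (k+1)).countP (fun x => decide (x ≤ L[k])) := by rw [hall, hlen2]
    _ ≤ L.countP (fun x => decide (x ≤ L[k])) := (List.take_sublist _ _).countP_le

lemma le_ordDesc_of_countP {M : Multiset ℝ} {v : ℝ} {k : ℕ}
    (h : k + 1 ≤ M.countP (fun x => v ≤ x)) : v ≤ ordDesc M k := by
  set L := M.sort (· ≤ ·) with hL
  have hlen : L.length = Multiset.card M := Multiset.length_sort _
  have hs : L.Pairwise (· ≤ ·) := Multiset.pairwise_sort _ _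
  rw [← countP_sort (M := M) (p := fun x => v ≤ x), ← hL] at h
  have hk : k < L.length := by
    have := List.countP_le_length (l := L) (p := fun x => decide (v ≤ x)); omega
  have hk' : k < L.reverse.length := by simpa using hk
  rw [ordDesc, ← hL, List.getD_eq_getElem _ _ hk', List.getElem_reverse]
  by_contra hvk
  push_neg at hvk
  have hcnt : L.countP (fun x => decide (v ≤ x)) ≤ k := by
    have hsplit : L.countP (fun x => decide (v ≤ x))
        = (L.take (L.length - k)).countP (fun x => decide (v ≤ x))
          + (L.drop (L.length - k)).countP (fun x => decide (v ≤ x)) := by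
      rw [← List.countP_append, List.take_append_drop]
    have h1 : (L.take (L.length - k)).countP (fun x => decide (v ≤ x)) = 0 := by
      rw [List.countP_eq_zero]
      intro a ha
      rw [List.mem_iff_getElem] at ha
      obtain ⟨i, hi, rfl⟩ := ha
      have hi' : i < L.length - k := by rw [List.length_take] at hi; omega
      have : (L.take (L.length - k))[i] ≤ L[L.length - 1 - k] := by
        rw [List.getElem_take]
        exact sorted_getElem_le hs (by omega) (by omega)
      simp only [decide_eq_true_eq, not_le]
      linarith
    have h2 : (L.drop (L.length - k)).countP (fun x => decide (v ≤ x))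
        ≤ (L.drop (L.length - k)).length := List.countP_le_length
    rw [List.length_drop] at h2
    omega
  omega

lemma ordDesc_le_of_countP {M : Multiset ℝ} {v : ℝ} {k : ℕ}
    (h : M.countP (fun x => v < x) ≤ k) (hk : k < Multiset.card M) : ordDesc M k ≤ v := by
  set L := M.sort (· ≤ ·) with hL
  have hlen : L.length = Multiset.card M := Multiset.length_sort _
  have hs : L.Pairwise (· ≤ ·) := Multiset.pairwise_sort _ _
  rw [← countP_sort (M := M) (p := fun x => v < x), ← hL] at h
  have hk' : k < L.length := by omega
  have hk'' : k < L.reverse.length := by simpa using hk'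
  rw [ordDesc, ← hL, List.getD_eq_getElem _ _ hk'', List.getElem_reverse]
  by_contra hvk
  push_neg at hvk
  have hcnt : k + 1 ≤ L.countP (fun x => decide (v < x)) := by
    have hall : (L.drop (L.length - 1 - k)).countP (fun x => decide (v < x))
        = (L.drop (L.length - 1 - k)).length := by
      rw [List.countP_eq_length]
      intro a ha
      rw [List.mem_iff_getElem] at ha
      obtain ⟨i, hi, rfl⟩ := ha
      have hi' : i < L.length - (L.length - 1 - k) := by rw [List.length_drop] at hi; omega
      have : L[L.length - 1 - k] ≤ (L.drop (L.length - 1 - k))[i] := by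
        rw [List.getElem_drop]
        exact sorted_getElem_le hs (by omega) (by omega)
      simp only [decide_eq_true_eq]
      linarith
    have hlen2 : (L.drop (L.length - 1 - k)).length = k + 1 := by rw [List.length_drop]; omega
    calc k + 1 = (L.drop (L.length - 1 - k)).countP (fun x => decide (v < x)) := by
          rw [hall, hlen2]
      _ ≤ L.countP (fun x => decide (v < x)) := (List.drop_sublist _ _).countP_le
  omega

lemma countP_ordDesc {M : Multiset ℝ} {k : ℕ} (hk : k < Multiset.card M) :
    k + 1 ≤ M.countP (fun x => ordDesc M k ≤ x) := by
  set L := M.sort (· ≤ ·) with hL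
  have hlen : L.length = Multiset.card M := Multiset.length_sort _
  have hs : L.Pairwise (· ≤ ·) := Multiset.pairwise_sort _ _
  have hk' : k < L.length := by omega
  have hk'' : k < L.reverse.length := by simpa using hk'
  rw [ordDesc, ← hL, List.getD_eq_getElem _ _ hk'', List.getElem_reverse]
  rw [← countP_sort, ← hL]
  have hall : (L.drop (L.length - 1 - k)).countP (fun x => decide (L[L.length - 1 - k] ≤ x))
      = (L.drop (L.length - 1 - k)).length := by
    rw [List.countP_eq_length]
    intro a ha
    rw [List.mem_iff_getElem] at ha
    obtain ⟨i, hi, rfl⟩ := ha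
    have hi' : i < L.length - (L.length - 1 - k) := by rw [List.length_drop] at hi; omega
    have : L[L.length - 1 - k] ≤ (L.drop (L.length - 1 - k))[i] := by
      rw [List.getElem_drop]
      exact sorted_getElem_le hs (by omega) (by omega)
    simpa using this
  have hlen2 : (L.drop (L.length - 1 - k)).length = k + 1 := by rw [List.length_drop]; omega
  calc k + 1 = (L.drop (L.length - 1 - k)).countP (fun x => decide (L[L.length - 1 - k] ≤ x)) := by
        rw [hall, hlen2]
    _ ≤ L.countP (fun x => decide (L[L.length - 1 - k] ≤ x)) := (List.drop_sublist _ _).countP_le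

end OrderStats

section TradeLemmas

lemma ordAsc_mono {M : Multiset ℝ} {k l : ℕ} (hkl : k ≤ l) (hl : l < Multiset.card M) :
    ordAsc M k ≤ ordAsc M l :=
  ordAsc_le_of_countP (le_trans (by omega) (countP_ordAsc hl))

lemma ordDesc_anti {M : Multiset ℝ} {k l : ℕ} (hkl : k ≤ l) (hl : l < Multiset.card M) :
    ordDesc M l ≤ ordDesc M k :=
  le_ordDesc_of_countP (le_trans (by omega) (countP_ordDesc hl))

lemma ordAsc_sub {M M' : Multiset ℝ} (h : M ≤ M') {k : ℕ} (hk : k < Multiset.card M) :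
    ordAsc M' k ≤ ordAsc M k :=
  ordAsc_le_of_countP (le_trans (countP_ordAsc hk) (Multiset.countP_le_of_le _ h))

lemma ordDesc_sub {M M' : Multiset ℝ} (h : M ≤ M') {k : ℕ} (hk : k < Multiset.card M) :
    ordDesc M k ≤ ordDesc M' k :=
  le_ordDesc_of_countP (le_trans (countP_ordDesc hk) (Multiset.countP_le_of_le _ h))

lemma tradeSize_le_card_left (B S : Multiset ℝ) : tradeSize B S ≤ Multiset.card B :=
  le_trans (Nat.findGreatest_le _) (min_le_left _ _)

lemma tradeSize_le_card_right (B S : Multiset ℝ) : tradeSize B S ≤ Multiset.card S :=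
  le_trans (Nat.findGreatest_le _) (min_le_right _ _)

lemma tradeSize_spec {B S : Multiset ℝ} (h : 0 < tradeSize B S) :
    ordAsc S (tradeSize B S - 1) ≤ ordDesc B (tradeSize B S - 1) := by
  have hspec := Nat.findGreatest_spec (m := 0)
    (P := fun r => 0 < r → ordAsc S (r - 1) ≤ ordDesc B (r - 1))
    (n := min (Multiset.card B) (Multiset.card S)) (Nat.zero_le _)
    (fun h0 => absurd h0 (lt_irrefl 0))
  exact hspec h

lemma tradeSize_ge {B S : Multiset ℝ} {v : ℝ} {k : ℕ}
    (hb : k + 1 ≤ B.countP (fun x => v ≤ x)) (hsl : k + 1 ≤ S.countP (fun x => x ≤ v)) :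
    k + 1 ≤ tradeSize B S := by
  apply Nat.le_findGreatest
  · have h1 := le_trans hb (Multiset.countP_le_card _ B)
    have h2 := le_trans hsl (Multiset.countP_le_card _ S)
    omega
  · intro _
    have h1 := ordAsc_le_of_countP hsl
    have h2 := le_ordDesc_of_countP hb
    simpa using le_trans h1 h2

lemma tradeSize_mono {B S B' S' : Multiset ℝ} (hB : B ≤ B') (hS : S ≤ S') :
    tradeSize B S ≤ tradeSize B' S' := by
  rcases Nat.eq_zero_or_pos (tradeSize B S) with h0 | hpos
  · omega
  · have hrB : tradeSize B S ≤ Multiset.card B := tradeSize_le_card_left _ _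
    have hrS : tradeSize B S ≤ Multiset.card S := tradeSize_le_card_right _ _
    have hspec := tradeSize_spec hpos
    have hb' : ordDesc B (tradeSize B S - 1) ≤ ordDesc B' (tradeSize B S - 1) :=
      ordDesc_sub hB (by omega)
    have hs' : ordAsc S' (tradeSize B S - 1) ≤ ordAsc S (tradeSize B S - 1) :=
      ordAsc_sub hS (by omega)
    apply Nat.le_findGreatest
    · have := Multiset.card_le_card hB
      have := Multiset.card_le_card hS
      omega
    · intro _
      exact le_trans hs' (le_trans hspec hb')

lemma term_nonneg {B S : Multiset ℝ} {i : ℕ} (hi : i < tradeSize B S) :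
    ordAsc S i ≤ ordDesc B i := by
  have hpos : 0 < tradeSize B S := by omega
  have h1 : tradeSize B S ≤ Multiset.card S := tradeSize_le_card_right _ _
  have h2 : tradeSize B S ≤ Multiset.card B := tradeSize_le_card_left _ _
  calc ordAsc S i ≤ ordAsc S (tradeSize B S - 1) := ordAsc_mono (by omega) (by omega)
    _ ≤ ordDesc B (tradeSize B S - 1) := tradeSize_spec hpos
    _ ≤ ordDesc B i := ordDesc_anti (by omega) (by omega)

lemma sum_helper {B S B' S' : Multiset ℝ} (hB : B ≤ B') (hS : S ≤ S') {t : ℕ}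
    (hrt : tradeSize B S ≤ t) (htr : t ≤ tradeSize B' S') :
    optGFT B S ≤ ∑ i ∈ Finset.range t, (ordDesc B' i - ordAsc S' i) := by
  have h1 : optGFT B S ≤ ∑ i ∈ Finset.range (tradeSize B S), (ordDesc B' i - ordAsc S' i) := by
    rw [optGFT]
    apply Finset.sum_le_sum
    intro i hi
    rw [Finset.mem_range] at hi
    have hiB : i < Multiset.card B := lt_of_lt_of_le hi (tradeSize_le_card_left _ _)
    have hiS : i < Multiset.card S := lt_of_lt_of_le hi (tradeSize_le_card_right _ _)
    have e1 := ordDesc_sub hB hiB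
    have e2 := ordAsc_sub hS hiS
    linarith
  refine le_trans h1 (Finset.sum_le_sum_of_subset_of_nonneg (Finset.range_subset_range.mpr hrt) ?_)
  intro i hi _
  rw [Finset.mem_range] at hi
  have := term_nonneg (lt_of_lt_of_le hi htr)
  linarith

lemma main_compare {B S B' S' : Multiset ℝ} (hB : B ≤ B') (hS : S ≤ S')
    (H : tradeSize B S + 1 ≤ tradeSize B' S' ∨
      (tradeSize B' S' = Multiset.card S' ∨
        (0 < tradeSize B' S' ∧ ordAsc S' (tradeSize B' S') ≤ ordDesc B' (tradeSize B' S' - 1)))) :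
    optGFT B S ≤ strGFT B' S' := by
  rw [strGFT]
  split_ifs with hcond
  · exact sum_helper hB hS (tradeSize_mono hB hS) le_rfl
  · have hH : tradeSize B S + 1 ≤ tradeSize B' S' := by tauto
    exact sum_helper hB hS (by omega) (by omega)

end TradeLemmas


section Market

private lemma countP_map_filter {α : Type*} (F : Finset α) (f : α → ℝ) (pr : ℝ → Prop)
    [DecidablePred pr] :
    Multiset.countP pr (F.val.map f) = (F.filter (fun i => pr (f i))).card := by
  rw [Multiset.countP_map]
  rfl

private lemma countP_map_union {α : Type*} [DecidableEq α] {F G : Finset α} (h : Disjoint F G)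
    (f : α → ℝ) (pr : ℝ → Prop) [DecidablePred pr] :
    Multiset.countP pr ((F ∪ G).val.map f)
      = (F.filter (fun i => pr (f i))).card + (G.filter (fun i => pr (f i))).card := by
  rw [countP_map_filter, Finset.filter_union,
    Finset.card_union_of_disjoint
      (Disjoint.mono (Finset.filter_subset _ _) (Finset.filter_subset _ _) h)]

/-- In any index set `X`, all but `n + 2c` elements are old buyers. -/
private lemma card_filter_BO_ge (m n c : ℕ) (π : Fin (NN m n c) → Label)
    (hBn : (labelSet m n c .BN π).card = c) (hSo : (labelSet m n c .SO π).card = n)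
    (hSn : (labelSet m n c .SN π).card = c) (X : Finset (Fin (NN m n c))) :
    X.card ≤ (X.filter (fun x => π x = .BO)).card + (n + 2 * c) := by
  have hsplit := Finset.card_filter_add_card_filter_not
    (s := X) (p := fun x => π x = Label.BO)
  have hsub : X.filter (fun x => ¬ π x = Label.BO)
      ⊆ labelSet m n c .BN π ∪ labelSet m n c .SO π ∪ labelSet m n c .SN π := by
    intro x hx
    rw [Finset.mem_filter] at hx
    simp only [Finset.mem_union, labelSet, Finset.mem_filter, Finset.mem_univ, true_and]
    cases h : π x
    · exact absurd h hx.2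
    · tauto
    · tauto
    · tauto
  have h1 := Finset.card_le_card hsub
  have h2 := Finset.card_union_le (labelSet m n c .BN π ∪ labelSet m n c .SO π)
    (labelSet m n c .SN π)
  have h3 := Finset.card_union_le (labelSet m n c .BN π) (labelSet m n c .SO π)
  omega

/-- Variant when one new seller `i` is known to lie outside `X`. -/
private lemma card_filter_BO_ge' (m n c : ℕ) (π : Fin (NN m n c) → Label)
    (hBn : (labelSet m n c .BN π).card = c) (hSo : (labelSet m n c .SO π).card = n)
    (hSn : (labelSet m n c .SN π).card = c) (hc : 1 ≤ c)
    (i : Fin (NN m n c)) (hi : π i = .SN) (X : Finset (Fin (NN m n c))) (hiX : i ∉ X) :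
    X.card ≤ (X.filter (fun x => π x = .BO)).card + (n + 2 * c - 1) := by
  have hsplit := Finset.card_filter_add_card_filter_not
    (s := X) (p := fun x => π x = Label.BO)
  have hsub : X.filter (fun x => ¬ π x = Label.BO)
      ⊆ labelSet m n c .BN π ∪ labelSet m n c .SO π ∪ (labelSet m n c .SN π).erase i := by
    intro x hx
    rw [Finset.mem_filter] at hx
    simp only [Finset.mem_union, labelSet, Finset.mem_filter, Finset.mem_univ, true_and,
      Finset.mem_erase]
    cases h : π x
    · exact absurd h hx.2
    · tauto
    · tauto
    · refine Or.inr ⟨fun hxi => hiX (hxi ▸ hx.1), by simp [labelSet, h]⟩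
  have h1 := Finset.card_le_card hsub
  have h2 := Finset.card_union_le (labelSet m n c .BN π ∪ labelSet m n c .SO π)
    ((labelSet m n c .SN π).erase i)
  have h3 := Finset.card_union_le (labelSet m n c .BN π) (labelSet m n c .SO π)
  have h4 : ((labelSet m n c .SN π).erase i).card = c - 1 := by
    rw [Finset.card_erase_of_mem (by simp [labelSet, hi]), hSn]
  omega

end Market

/-- Assume `m ≥ n ≥ 20`, `c ≥ 1`, and `b(q) ≥ s(q)` for all
`q ∈ (0,1)`. Fix quantiles `1 > q₁ ≥ … ≥ q_N > 0`. Then `STR(q,π) ≥ OPT(q,π)` for every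
valid assignment `π` not in `E₂`. -/
theorem not_E2_STR_ge_OPT (m n c : ℕ) (hnm : n ≤ m) (hn : 20 ≤ n) (hc : 1 ≤ c)
    (b s : ℝ → ℝ) (hb : MonotoneOn b (Set.Ioo 0 1)) (hs : MonotoneOn s (Set.Ioo 0 1))
    (hbs : ∀ x ∈ Set.Ioo (0 : ℝ) 1, s x ≤ b x)
    (q : Fin (NN m n c) → ℝ) (hq : ∀ i, q i ∈ Set.Ioo (0 : ℝ) 1) (hqa : Antitone q) :
    ∀ π ∈ validAssignments m n c, π ∉ E2 m n c →
      OPTq m n c q b s π ≤ STRq m n c q b s π := by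
  intro π hπ hπE2
  have hπ' := hπ
  rw [validAssignments, Finset.mem_filter] at hπ'
  obtain ⟨-, hmBO, hcBN, hnSO, hcSN⟩ := hπ'
  have hNN : NN m n c = m + n + 2 * c := rfl
  have hp : pVal n = (n + 9) / 10 := rfl
  have key : ∀ x y : Fin (NN m n c), x ≤ y → s (q y) ≤ b (q x) := fun x y hxy =>
    le_trans (hbs _ (hq y)) (hb (hq y) (hq x) (hqa hxy))
  have hbmono : ∀ x y : Fin (NN m n c), x ≤ y → b (q y) ≤ b (q x) := fun x y hxy =>
    hb (hq y) (hq x) (hqa hxy)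
  have hsmono : ∀ x y : Fin (NN m n c), x ≤ y → s (q y) ≤ s (q x) := fun x y hxy =>
    hs (hq y) (hq x) (hqa hxy)
  set Bo := labelSet m n c .BO π with hBo
  set Bn := labelSet m n c .BN π with hBndef
  set So := labelSet m n c .SO π with hSodef
  set Sn := labelSet m n c .SN π with hSndef
  have hdBB : Disjoint Bo Bn := by
    rw [Finset.disjoint_left]
    intro a ha hb'
    rw [hBo, labelSet, Finset.mem_filter] at ha
    rw [hBndef, labelSet, Finset.mem_filter] at hb'
    exact Label.noConfusion (ha.2.symm.trans hb'.2)
  have hdSS : Disjoint So Sn := by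
    rw [Finset.disjoint_left]
    intro a ha hb'
    rw [hSodef, labelSet, Finset.mem_filter] at ha
    rw [hSndef, labelSet, Finset.mem_filter] at hb'
    exact Label.noConfusion (ha.2.symm.trans hb'.2)
  set BM := Bo.val.map (fun i => b (q i)) with hBM
  set SM := So.val.map (fun i => s (q i)) with hSM
  set BM' := (Bo ∪ Bn).val.map (fun i => b (q i)) with hBM'
  set SM' := (So ∪ Sn).val.map (fun i => s (q i)) with hSM'
  have hBsub : BM ≤ BM' := Multiset.map_le_map (Finset.val_le_iff.mpr Finset.subset_union_left)
  have hSsub : SM ≤ SM' := Multiset.map_le_map (Finset.val_le_iff.mpr Finset.subset_union_left)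
  have hBMcard : Multiset.card BM = m := by rw [hBM, Multiset.card_map]; exact hmBO
  have hSMcard : Multiset.card SM = n := by rw [hSM, Multiset.card_map]; exact hnSO
  set r := tradeSize BM SM with hr
  have hrn : r ≤ n := by rw [hr, ← hSMcard]; exact tradeSize_le_card_right _ _
  have hrm : r ≤ m := by rw [hr, ← hBMcard]; exact tradeSize_le_card_left _ _
  have hcase : π ∈ E1 m n c ∨ ∃ i, i ∈ Sn ∧ 2 * n + 2 * c ≤ (i : ℕ) := by
    by_cases hE1 : π ∈ E1 m n c
    · exact Or.inl hE1
    · right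
      by_contra hno
      push_neg at hno
      exact hπE2 (by
        rw [E2, Finset.mem_filter]
        exact ⟨hπ, hE1, fun i hi => by have := hno i hi; omega⟩)
  show optGFT BM SM ≤ strGFT BM' SM'
  apply main_compare hBsub hSsub
  rcases hcase with hE1 | ⟨i, hiSn, hi2⟩
  · -- Case E₁
    rw [E1, Finset.mem_filter] at hE1
    obtain ⟨-, h2BN, -, h2SN, -⟩ := hE1
    obtain ⟨j, hj⟩ := Finset.card_pos.mp
      (by omega : 0 < (I1 m n c ∩ labelSet m n c .BN π).card)
    rw [Finset.mem_inter] at hj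
    have hjp : (j : ℕ) < pVal n := by
      have := hj.1; rw [I1, Finset.mem_filter] at this; exact this.2
    have hjBn : j ∈ Bn := hj.2
    obtain ⟨i', hi'⟩ := Finset.card_pos.mp
      (by omega : 0 < (J1 m n c ∩ labelSet m n c .SN π).card)
    rw [Finset.mem_inter] at hi'
    have hi'p : NN m n c - pVal n ≤ (i' : ℕ) := by
      have := hi'.1; rw [J1, Finset.mem_filter] at this; exact this.2
    have hi'Sn : i' ∈ Sn := hi'.2
    have hi'N : (i' : ℕ) < NN m n c := i'.isLt
    have hmain : s (q i') ≤ b (q j) := key j i' (by rw [Fin.le_def]; omega)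
    left
    rcases Nat.eq_zero_or_pos r with hr0 | hrpos
    · have h1 : 0 + 1 ≤ Multiset.countP (fun x => s (q i') ≤ x) BM' := by
        rw [hBM', countP_map_union hdBB]
        have hmem : j ∈ Bn.filter (fun i => s (q i') ≤ b (q i)) :=
          Finset.mem_filter.mpr ⟨hjBn, hmain⟩
        have := Finset.card_pos.mpr ⟨j, hmem⟩
        omega
      have h2 : 0 + 1 ≤ Multiset.countP (fun x => x ≤ s (q i')) SM' := by
        rw [hSM', countP_map_union hdSS]
        have hmem : i' ∈ Sn.filter (fun i => s (q i) ≤ s (q i')) :=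
          Finset.mem_filter.mpr ⟨hi'Sn, le_refl _⟩
        have := Finset.card_pos.mpr ⟨i', hmem⟩
        omega
      have := tradeSize_ge h1 h2
      omega
    · have hspec : ordAsc SM (r - 1) ≤ ordDesc BM (r - 1) := tradeSize_spec hrpos
      have cross2 : s (q i') ≤ ordDesc BM (r - 1) := by
        rcases le_or_gt (pVal n) r with hpr | hrp
        · refine le_trans (le_ordAsc_of_countP ?_ (by omega)) hspec
          rw [hSM, countP_map_filter]
          have hsub : So.filter (fun x => s (q x) < s (q i')) ⊆ Finset.Ioi i' := by
            intro x hx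
            rw [Finset.mem_filter] at hx
            rw [Finset.mem_Ioi]
            by_contra hxle
            push_neg at hxle
            exact absurd hx.2 (not_lt.mpr (hsmono x i' hxle))
          have := Finset.card_le_card hsub
          rw [Fin.card_Ioi] at this
          omega
        · have hcnt : (r - 1) + 1 ≤ Multiset.countP (fun x => s (q i') ≤ x) BM := by
            rw [hBM, countP_map_filter]
            have hsub : (Finset.Iic i').filter (fun x => π x = .BO)
                ⊆ Bo.filter (fun x => s (q i') ≤ b (q x)) := by
              intro x hx
              rw [Finset.mem_filter] at hx ⊢
              rw [Finset.mem_Iic] at hx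
              refine ⟨?_, key x i' hx.1⟩
              rw [hBo, labelSet, Finset.mem_filter]
              exact ⟨Finset.mem_univ _, hx.2⟩
            have h1 := Finset.card_le_card hsub
            have h2 := card_filter_BO_ge m n c π hcBN hnSO hcSN (Finset.Iic i')
            rw [Fin.card_Iic] at h2
            omega
          exact le_ordDesc_of_countP hcnt
      have cross1 : ordAsc SM (r - 1) ≤ b (q j) := by
        rcases le_or_gt (pVal n) r with hpr | hrp
        · refine le_trans hspec (ordDesc_le_of_countP ?_ (by omega))
          rw [hBM, countP_map_filter]
          have hsub : Bo.filter (fun x => b (q j) < b (q x)) ⊆ Finset.Iio j := by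
            intro x hx
            rw [Finset.mem_filter] at hx
            rw [Finset.mem_Iio]
            by_contra hxge
            push_neg at hxge
            exact absurd hx.2 (not_lt.mpr (hbmono j x hxge))
          have := Finset.card_le_card hsub
          rw [Fin.card_Iio] at this
          omega
        · apply ordAsc_le_of_countP
          rw [hSM, countP_map_filter]
          have hsub : So.filter (fun x => j ≤ x) ⊆ So.filter (fun x => s (q x) ≤ b (q j)) := by
            intro x hx
            rw [Finset.mem_filter] at hx ⊢
            exact ⟨hx.1, key j x hx.2⟩
          have h1 := Finset.card_le_card hsub
          have h2 := Finset.card_filter_add_card_filter_not (s := So)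
            (p := fun x => j ≤ x)
          have h3 : So.filter (fun x => ¬ j ≤ x) ⊆ Finset.Iio j := by
            intro x hx
            rw [Finset.mem_filter] at hx
            rw [Finset.mem_Iio]
            exact not_le.mp hx.2
          have h4 := Finset.card_le_card h3
          rw [Fin.card_Iio] at h4
          omega
      have hv1 : r + 1 ≤ Multiset.countP
          (fun x => max (ordAsc SM (r - 1)) (s (q i')) ≤ x) BM' := by
        rw [hBM', countP_map_union hdBB]
        have hC6 := countP_ordDesc (M := BM) (k := r - 1) (by omega)
        rw [hBM, countP_map_filter] at hC6
        rw [← hBM] at hC6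
        have hsub : Bo.filter (fun i => ordDesc BM (r - 1) ≤ b (q i))
            ⊆ Bo.filter (fun i => max (ordAsc SM (r - 1)) (s (q i')) ≤ b (q i)) := by
          intro x hx
          rw [Finset.mem_filter] at hx ⊢
          exact ⟨hx.1, le_trans (max_le hspec cross2) hx.2⟩
        have hBopart := Finset.card_le_card hsub
        have hBnpart : 0 < (Bn.filter
            (fun i => max (ordAsc SM (r - 1)) (s (q i')) ≤ b (q i))).card :=
          Finset.card_pos.mpr ⟨j, Finset.mem_filter.mpr ⟨hjBn, max_le cross1 hmain⟩⟩
        omega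
      have hv2 : r + 1 ≤ Multiset.countP
          (fun x => x ≤ max (ordAsc SM (r - 1)) (s (q i'))) SM' := by
        rw [hSM', countP_map_union hdSS]
        have hC5 := countP_ordAsc (M := SM) (k := r - 1) (by omega)
        rw [hSM, countP_map_filter] at hC5
        rw [← hSM] at hC5
        have hsub : So.filter (fun i => s (q i) ≤ ordAsc SM (r - 1))
            ⊆ So.filter (fun i => s (q i) ≤ max (ordAsc SM (r - 1)) (s (q i'))) := by
          intro x hx
          rw [Finset.mem_filter] at hx ⊢
          exact ⟨hx.1, le_trans hx.2 (le_max_left _ _)⟩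
        have hSopart := Finset.card_le_card hsub
        have hSnpart : 0 < (Sn.filter
            (fun i => s (q i) ≤ max (ordAsc SM (r - 1)) (s (q i')))).card :=
          Finset.card_pos.mpr ⟨i', Finset.mem_filter.mpr ⟨hi'Sn, le_max_right _ _⟩⟩
        omega
      have := tradeSize_ge hv1 hv2
      omega
  · -- Case B : a new seller with a very low quantile
    have hiN : (i : ℕ) < NN m n c := i.isLt
    have hnm' : n < m := by omega
    have hiSn' : π i = .SN := by
      have h := hiSn
      rw [hSndef, labelSet, Finset.mem_filter] at h
      exact h.2
    have HB : n + 1 ≤ ((Finset.Iio i).filter (fun x => π x = .BO)).card := by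
      have h1 := card_filter_BO_ge' m n c π hcBN hnSO hcSN hc i hiSn' (Finset.Iio i)
        (by simp [Finset.mem_Iio])
      rw [Fin.card_Iio] at h1
      omega
    have HBv : n + 1 ≤ (Bo.filter (fun x => s (q i) ≤ b (q x))).card := by
      refine le_trans HB (Finset.card_le_card ?_)
      intro x hx
      rw [Finset.mem_filter] at hx ⊢
      rw [Finset.mem_Iio] at hx
      refine ⟨?_, key x i (le_of_lt hx.1)⟩
      rw [hBo, labelSet, Finset.mem_filter]
      exact ⟨Finset.mem_univ _, hx.2⟩
    rcases Nat.eq_zero_or_pos r with hr0 | hrpos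
    · left
      have h1 : 0 + 1 ≤ Multiset.countP (fun x => s (q i) ≤ x) BM' := by
        rw [hBM', countP_map_union hdBB]
        omega
      have h2 : 0 + 1 ≤ Multiset.countP (fun x => x ≤ s (q i)) SM' := by
        rw [hSM', countP_map_union hdSS]
        have hmem : i ∈ Sn.filter (fun i2 => s (q i2) ≤ s (q i)) :=
          Finset.mem_filter.mpr ⟨hiSn, le_refl _⟩
        have := Finset.card_pos.mpr ⟨i, hmem⟩
        omega
      have := tradeSize_ge h1 h2
      omega
    · have hspec : ordAsc SM (r - 1) ≤ ordDesc BM (r - 1) := tradeSize_spec hrpos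
      have hxw : s (q i) ≤ ordDesc BM r := by
        apply le_ordDesc_of_countP
        rw [hBM, countP_map_filter]
        omega
      rcases le_or_gt (s (q i)) (ordAsc SM (r - 1)) with hx | hx
      · by_cases hr' : r + 1 ≤ tradeSize BM' SM'
        · exact Or.inl hr'
        · have hmono : r ≤ tradeSize BM' SM' := tradeSize_mono hBsub hSsub
          have hr'' : tradeSize BM' SM' = r := by omega
          right; right
          refine ⟨by omega, ?_⟩
          rw [hr'']
          have hA : ordAsc SM' r ≤ ordAsc SM (r - 1) := by
            apply ordAsc_le_of_countP
            rw [hSM', countP_map_union hdSS]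
            have hC5 := countP_ordAsc (M := SM) (k := r - 1) (by omega)
            rw [hSM, countP_map_filter] at hC5
            rw [← hSM] at hC5
            have hSnpart : 0 < (Sn.filter (fun i2 => s (q i2) ≤ ordAsc SM (r - 1))).card :=
              Finset.card_pos.mpr ⟨i, Finset.mem_filter.mpr ⟨hiSn, hx⟩⟩
            omega
          have hD : ordDesc BM (r - 1) ≤ ordDesc BM' (r - 1) := ordDesc_sub hBsub (by omega)
          exact le_trans hA (le_trans hspec hD)
      · left
        have hv1 : r + 1 ≤ Multiset.countP (fun x => ordDesc BM r ≤ x) BM' := by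
          have hC6 := countP_ordDesc (M := BM) (k := r) (by omega)
          exact le_trans hC6 (Multiset.countP_le_of_le _ hBsub)
        have hv2 : r + 1 ≤ Multiset.countP (fun x => x ≤ ordDesc BM r) SM' := by
          rw [hSM', countP_map_union hdSS]
          have hC5 := countP_ordAsc (M := SM) (k := r - 1) (by omega)
          rw [hSM, countP_map_filter] at hC5
          rw [← hSM] at hC5
          have hsub : So.filter (fun i2 => s (q i2) ≤ ordAsc SM (r - 1))
              ⊆ So.filter (fun i2 => s (q i2) ≤ ordDesc BM r) := by
            intro x2 hx2
            rw [Finset.mem_filter] at hx2 ⊢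
            exact ⟨hx2.1, le_trans hx2.2 (le_trans (le_of_lt hx) hxw)⟩
          have hSopart := Finset.card_le_card hsub
          have hSnpart : 0 < (Sn.filter (fun i2 => s (q i2) ≤ ordDesc BM r)).card :=
            Finset.card_pos.mpr ⟨i, Finset.mem_filter.mpr ⟨hiSn, hxw⟩⟩
          omega
        have := tradeSize_ge hv1 hv2
        omega
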